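/- Let E be a Banach space, T > 0, and α, β ∈ (0,1] with β ≤ α. If u ∈ C^α_α((0,T],E) (i.e., u is bounded on (0,T] and t ↦ t^α u(t) is α-Hölder continuous on (0,T]) and v ∈ C^β_β((0,T],E') for another Banach space E' with a continuous bilinear multiplication E × E' → F, then the product uv belongs to C^β_β((0,T],F), and ‖uv‖_{β,β} ≤ C ‖u‖_{α,α} ‖v‖_{β,β}. -/

import Mathlib

open Real

private lemma sh_I1 {t s α β : ℝ} (hs : 0 < s) (hst : s < t) (hβ0 : 0 ≤ β) (hβα : β ≤ α) :
    t ^ (-α) * (t - s) ^ α * t ^ β ≤ (t - s) ^ β := by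
  have ht : (0:ℝ) < t := hs.trans hst
  have hd : (0:ℝ) < t - s := sub_pos.mpr hst
  have hta : (0:ℝ) < t ^ α := Real.rpow_pos_of_pos ht α
  have key : (t - s) ^ α * t ^ β ≤ t ^ α * (t - s) ^ β := by
    have h1 : (t - s) ^ α = (t - s) ^ (α - β) * (t - s) ^ β := by
      rw [← Real.rpow_add hd]; ring_nf
    have h2 : t ^ α = t ^ (α - β) * t ^ β := by
      rw [← Real.rpow_add ht]; ring_nf
    rw [h1, h2]
    have hm : (t - s) ^ (α - β) ≤ t ^ (α - β) :=
      Real.rpow_le_rpow hd.le (by linarith) (by linarith)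
    nlinarith [mul_le_mul_of_nonneg_right hm
      (mul_nonneg (Real.rpow_nonneg hd.le β) (Real.rpow_nonneg ht.le β))]
  have heq : t ^ (-α) * (t - s) ^ α * t ^ β = (t - s) ^ α * t ^ β / t ^ α := by
    rw [Real.rpow_neg ht.le]; ring
  rw [heq, div_le_iff₀ hta]
  linarith [key]

private lemma sh_I2 {t s α : ℝ} (hs : 0 < s) (hst : s < t) (hα : 0 ≤ α) :
    t ^ (-α) * s ^ α ≤ 1 := by
  have ht : (0:ℝ) < t := hs.trans hst
  have hta : (0:ℝ) < t ^ α := Real.rpow_pos_of_pos ht α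
  have heq : t ^ (-α) * s ^ α = s ^ α / t ^ α := by
    rw [Real.rpow_neg ht.le]; ring
  rw [heq, div_le_one hta]
  exact Real.rpow_le_rpow hs.le hst.le hα

private lemma sh_I3 {t s α β : ℝ} (hs : 0 < s) (hst : s < t)
    (hα : 0 < α) (hα1 : α ≤ 1) (hβ : 0 < β) (hβ1 : β ≤ 1) :
    (s ^ (-α) - t ^ (-α)) * (s ^ α * s ^ β) ≤ (t - s) ^ β := by
  have ht : (0:ℝ) < t := hs.trans hst
  have hd : (0:ℝ) < t - s := sub_pos.mpr hst
  set x := s / t with hxdef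
  have hx0 : 0 < x := div_pos hs ht
  have hx1 : x < 1 := (div_lt_one ht).mpr hst
  have e1 : s ^ (-α) * s ^ α = 1 := by
    rw [← Real.rpow_add hs]; norm_num
  have e2 : t ^ (-α) * s ^ α = x ^ α := by
    rw [hxdef, Real.div_rpow hs.le ht.le, Real.rpow_neg ht.le]; ring
  have lhs_eq : (s ^ (-α) - t ^ (-α)) * (s ^ α * s ^ β) = s ^ β * (1 - x ^ α) := by
    have : (s ^ (-α) - t ^ (-α)) * (s ^ α * s ^ β)
        = (s ^ (-α) * s ^ α) * s ^ β - (t ^ (-α) * s ^ α) * s ^ β := by ring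
    rw [this, e1, e2]; ring
  rw [lhs_eq]
  have hxα : x ≤ x ^ α := by
    calc x = x ^ (1:ℝ) := (Real.rpow_one x).symm
    _ ≤ x ^ α := Real.rpow_le_rpow_of_exponent_ge hx0 hx1.le hα1
  have hxα1 : x ^ α ≤ 1 := Real.rpow_le_one hx0.le hx1.le hα.le
  have h1x : 1 - x = (t - s) / t := by rw [hxdef, sub_div, div_self ht.ne']
  have hdt0 : 0 < (t - s) / t := div_pos hd ht
  have hdt1 : (t - s) / t < 1 := by rw [div_lt_one ht]; linarith
  have h3 : 1 - x ^ α ≤ ((t - s) / t) ^ β := by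
    calc 1 - x ^ α ≤ 1 - x := by linarith
    _ = (t - s) / t := h1x
    _ = ((t - s) / t) ^ (1:ℝ) := (Real.rpow_one _).symm
    _ ≤ ((t - s) / t) ^ β := Real.rpow_le_rpow_of_exponent_ge hdt0 hdt1.le hβ1
  calc s ^ β * (1 - x ^ α) ≤ s ^ β * ((t - s) / t) ^ β := by
        have := Real.rpow_nonneg hs.le β
        nlinarith
  _ = (s * ((t - s) / t)) ^ β := (Real.mul_rpow hs.le hdt0.le).symm
  _ ≤ (t - s) ^ β := by
      apply Real.rpow_le_rpow (by positivity) ?_ hβ.le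
      rw [mul_div_assoc']
      rw [div_le_iff₀ ht]
      nlinarith

private lemma sh_step {E E' F : Type*} [NormedAddCommGroup E] [NormedSpace ℝ E]
    [NormedAddCommGroup E'] [NormedSpace ℝ E'] [NormedAddCommGroup F] [NormedSpace ℝ F]
    (φ : E →L[ℝ] E' →L[ℝ] F) {α β : ℝ} (hα : 0 < α) (hα1 : α ≤ 1) (hβ : 0 < β)
    (hβ1 : β ≤ 1) (hβα : β ≤ α) (u : ℝ → E) (v : ℝ → E') {Bu Ku Bv Kv : ℝ}
    {t s : ℝ} (hs : 0 < s) (hst : s < t)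
    (hut : ‖u t‖ ≤ Bu) (hus : ‖u s‖ ≤ Bu) (hvt : ‖v t‖ ≤ Bv) (hvs : ‖v s‖ ≤ Bv)
    (hKu : ‖t ^ α • u t - s ^ α • u s‖ ≤ Ku * (t - s) ^ α)
    (hKv : ‖t ^ β • v t - s ^ β • v s‖ ≤ Kv * (t - s) ^ β) :
    ‖t ^ β • φ (u t) (v t) - s ^ β • φ (u s) (v s)‖ ≤
      ‖φ‖ * (Ku * Bv + Bu * Kv + Bu * Bv) * (t - s) ^ β := by
  have ht : (0:ℝ) < t := hs.trans hst
  have hd : (0:ℝ) < t - s := sub_pos.mpr hst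
  have hdα : (0:ℝ) < (t - s) ^ α := Real.rpow_pos_of_pos hd α
  have hdβ : (0:ℝ) < (t - s) ^ β := Real.rpow_pos_of_pos hd β
  have hBu0 : 0 ≤ Bu := (norm_nonneg _).trans hut
  have hBv0 : 0 ≤ Bv := (norm_nonneg _).trans hvt
  have hKu0 : 0 ≤ Ku := by nlinarith [norm_nonneg (t ^ α • u t - s ^ α • u s)]
  have hKv0 : 0 ≤ Kv := by nlinarith [norm_nonneg (t ^ β • v t - s ^ β • v s)]
  have htan : (0:ℝ) < t ^ (-α) := Real.rpow_pos_of_pos ht _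
  have hsan : (0:ℝ) < s ^ (-α) := Real.rpow_pos_of_pos hs _
  have hmono : t ^ (-α) ≤ s ^ (-α) :=
    Real.rpow_le_rpow_of_nonpos hs hst.le (by linarith)
  -- the decomposition
  have e1 : t ^ (-α) * (t ^ β * t ^ α) = t ^ β := by
    rw [← Real.rpow_add ht, ← Real.rpow_add ht]; ring_nf
  have e2 : (t ^ (-α) - s ^ (-α)) * (s ^ β * s ^ α)
      = t ^ (-α) * (s ^ β * s ^ α) - s ^ β := by
    have e2' : s ^ (-α) * (s ^ β * s ^ α) = s ^ β := by
      rw [← Real.rpow_add hs, ← Real.rpow_add hs]; ring_nf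
    rw [sub_mul, e2']
  have key_eq : t ^ β • φ (u t) (v t) - s ^ β • φ (u s) (v s)
      = t ^ (-α) • (φ (t ^ α • u t - s ^ α • u s) (t ^ β • v t))
      + t ^ (-α) • (φ (s ^ α • u s) (t ^ β • v t - s ^ β • v s))
      + (t ^ (-α) - s ^ (-α)) • (φ (s ^ α • u s) (s ^ β • v s)) := by
    simp only [map_sub, map_smul, ContinuousLinearMap.sub_apply,
      ContinuousLinearMap.smul_apply, smul_sub, sub_smul, smul_smul]
    rw [e1, e2, sub_smul]
    abel
  rw [key_eq]
  have hb1 : ‖t ^ (-α) • (φ (t ^ α • u t - s ^ α • u s) (t ^ β • v t))‖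
      ≤ ‖φ‖ * Ku * Bv * (t - s) ^ β := by
    rw [norm_smul, Real.norm_eq_abs, abs_of_pos htan]
    have h1 : ‖φ (t ^ α • u t - s ^ α • u s) (t ^ β • v t)‖
        ≤ ‖φ‖ * (Ku * (t - s) ^ α) * (t ^ β * Bv) := by
      calc ‖φ (t ^ α • u t - s ^ α • u s) (t ^ β • v t)‖
          ≤ ‖φ‖ * ‖t ^ α • u t - s ^ α • u s‖ * ‖t ^ β • v t‖ :=
            ContinuousLinearMap.le_opNorm₂ φ _ _
      _ ≤ ‖φ‖ * (Ku * (t - s) ^ α) * (t ^ β * Bv) := by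
            have : ‖t ^ β • v t‖ = t ^ β * ‖v t‖ := by
              rw [norm_smul, Real.norm_eq_abs, abs_of_pos (Real.rpow_pos_of_pos ht β)]
            rw [this]
            gcongr
      _ = _ := rfl
    calc t ^ (-α) * ‖φ (t ^ α • u t - s ^ α • u s) (t ^ β • v t)‖
        ≤ t ^ (-α) * (‖φ‖ * (Ku * (t - s) ^ α) * (t ^ β * Bv)) := by
          exact mul_le_mul_of_nonneg_left h1 htan.le
    _ = (‖φ‖ * Ku * Bv) * (t ^ (-α) * (t - s) ^ α * t ^ β) := by ring
    _ ≤ (‖φ‖ * Ku * Bv) * (t - s) ^ β := by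
          apply mul_le_mul_of_nonneg_left (sh_I1 hs hst hβ.le hβα)
          positivity
    _ = ‖φ‖ * Ku * Bv * (t - s) ^ β := by ring
  have hb2 : ‖t ^ (-α) • (φ (s ^ α • u s) (t ^ β • v t - s ^ β • v s))‖
      ≤ ‖φ‖ * Bu * Kv * (t - s) ^ β := by
    rw [norm_smul, Real.norm_eq_abs, abs_of_pos htan]
    have h1 : ‖φ (s ^ α • u s) (t ^ β • v t - s ^ β • v s)‖
        ≤ ‖φ‖ * (s ^ α * Bu) * (Kv * (t - s) ^ β) := by
      calc ‖φ (s ^ α • u s) (t ^ β • v t - s ^ β • v s)‖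
          ≤ ‖φ‖ * ‖s ^ α • u s‖ * ‖t ^ β • v t - s ^ β • v s‖ :=
            ContinuousLinearMap.le_opNorm₂ φ _ _
      _ ≤ ‖φ‖ * (s ^ α * Bu) * (Kv * (t - s) ^ β) := by
            have : ‖s ^ α • u s‖ = s ^ α * ‖u s‖ := by
              rw [norm_smul, Real.norm_eq_abs, abs_of_pos (Real.rpow_pos_of_pos hs α)]
            rw [this]
            gcongr
    calc t ^ (-α) * ‖φ (s ^ α • u s) (t ^ β • v t - s ^ β • v s)‖
        ≤ t ^ (-α) * (‖φ‖ * (s ^ α * Bu) * (Kv * (t - s) ^ β)) :=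
          mul_le_mul_of_nonneg_left h1 htan.le
    _ = (‖φ‖ * Bu * Kv * (t - s) ^ β) * (t ^ (-α) * s ^ α) := by ring
    _ ≤ (‖φ‖ * Bu * Kv * (t - s) ^ β) * 1 := by
          apply mul_le_mul_of_nonneg_left (sh_I2 hs hst hα.le)
          positivity
    _ = ‖φ‖ * Bu * Kv * (t - s) ^ β := by ring
  have hb3 : ‖(t ^ (-α) - s ^ (-α)) • (φ (s ^ α • u s) (s ^ β • v s))‖
      ≤ ‖φ‖ * Bu * Bv * (t - s) ^ β := by
    rw [norm_smul, Real.norm_eq_abs, abs_of_nonpos (by linarith), neg_sub]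
    have h1 : ‖φ (s ^ α • u s) (s ^ β • v s)‖
        ≤ ‖φ‖ * (s ^ α * Bu) * (s ^ β * Bv) := by
      calc ‖φ (s ^ α • u s) (s ^ β • v s)‖
          ≤ ‖φ‖ * ‖s ^ α • u s‖ * ‖s ^ β • v s‖ :=
            ContinuousLinearMap.le_opNorm₂ φ _ _
      _ ≤ ‖φ‖ * (s ^ α * Bu) * (s ^ β * Bv) := by
            have ha : ‖s ^ α • u s‖ = s ^ α * ‖u s‖ := by
              rw [norm_smul, Real.norm_eq_abs, abs_of_pos (Real.rpow_pos_of_pos hs α)]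
            have hbb : ‖s ^ β • v s‖ = s ^ β * ‖v s‖ := by
              rw [norm_smul, Real.norm_eq_abs, abs_of_pos (Real.rpow_pos_of_pos hs β)]
            rw [ha, hbb]
            gcongr
    calc (s ^ (-α) - t ^ (-α)) * ‖φ (s ^ α • u s) (s ^ β • v s)‖
        ≤ (s ^ (-α) - t ^ (-α)) * (‖φ‖ * (s ^ α * Bu) * (s ^ β * Bv)) :=
          mul_le_mul_of_nonneg_left h1 (by linarith)
    _ = (‖φ‖ * Bu * Bv) * ((s ^ (-α) - t ^ (-α)) * (s ^ α * s ^ β)) := by ring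
    _ ≤ (‖φ‖ * Bu * Bv) * (t - s) ^ β := by
          apply mul_le_mul_of_nonneg_left (sh_I3 hs hst hα hα1 hβ hβ1)
          positivity
    _ = ‖φ‖ * Bu * Bv * (t - s) ^ β := by ring
  calc ‖_ + _ + _‖ ≤ _ := norm_add₃_le
  _ ≤ ‖φ‖ * Ku * Bv * (t - s) ^ β + ‖φ‖ * Bu * Kv * (t - s) ^ β
      + ‖φ‖ * Bu * Bv * (t - s) ^ β := by
        exact add_le_add (add_le_add hb1 hb2) hb3
  _ = ‖φ‖ * (Ku * Bv + Bu * Kv + Bu * Bv) * (t - s) ^ β := by ring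

/-- Multiplication property `C^α_α × C^β_β → C^β_β` of singular Hölder spaces. -/
theorem singular_holder_mult (E E' F : Type*) [NormedAddCommGroup E] [NormedSpace ℝ E]
    [NormedAddCommGroup E'] [NormedSpace ℝ E'] [NormedAddCommGroup F] [NormedSpace ℝ F]
    (φ : E →L[ℝ] E' →L[ℝ] F) (T α β : ℝ) (hT : 0 < T)
    (hα : α ∈ Set.Ioc (0:ℝ) 1) (hβ : β ∈ Set.Ioc (0:ℝ) 1) (hβα : β ≤ α) :
    ∃ C > 0, ∀ (u : ℝ → E) (v : ℝ → E') (Bu Ku Bv Kv : ℝ),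
      (∀ t ∈ Set.Ioc 0 T, ‖u t‖ ≤ Bu) →
      (∀ t ∈ Set.Ioc 0 T, ∀ s ∈ Set.Ioc 0 T,
        ‖t ^ α • u t - s ^ α • u s‖ ≤ Ku * |t - s| ^ α) →
      (∀ t ∈ Set.Ioc 0 T, ‖v t‖ ≤ Bv) →
      (∀ t ∈ Set.Ioc 0 T, ∀ s ∈ Set.Ioc 0 T,
        ‖t ^ β • v t - s ^ β • v s‖ ≤ Kv * |t - s| ^ β) →
      (∀ t ∈ Set.Ioc 0 T, ‖φ (u t) (v t)‖ ≤ C * (Bu + Ku) * (Bv + Kv)) ∧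
      (∀ t ∈ Set.Ioc 0 T, ∀ s ∈ Set.Ioc 0 T,
        ‖t ^ β • φ (u t) (v t) - s ^ β • φ (u s) (v s)‖ ≤
          C * (Bu + Ku) * (Bv + Kv) * |t - s| ^ β) := by
  obtain ⟨hα0, hα1⟩ := hα
  obtain ⟨hβ0, hβ1⟩ := hβ
  refine ⟨‖φ‖ + 1, by positivity, ?_⟩
  intro u v Bu Ku Bv Kv hBu hKu hBv hKv
  have hTm : T ∈ Set.Ioc (0:ℝ) T := ⟨hT, le_refl T⟩
  have hT2m : T / 2 ∈ Set.Ioc (0:ℝ) T := ⟨by linarith, by linarith⟩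
  have hBu0 : 0 ≤ Bu := (norm_nonneg _).trans (hBu T hTm)
  have hBv0 : 0 ≤ Bv := (norm_nonneg _).trans (hBv T hTm)
  have habs : (0:ℝ) < |T - T / 2| := abs_pos.mpr (by linarith)
  have hKu0 : 0 ≤ Ku := by
    have h := hKu T hTm (T / 2) hT2m
    have hp : (0:ℝ) < |T - T / 2| ^ α := Real.rpow_pos_of_pos habs α
    nlinarith [norm_nonneg (T ^ α • u T - (T / 2) ^ α • u (T / 2))]
  have hKv0 : 0 ≤ Kv := by
    have h := hKv T hTm (T / 2) hT2m
    have hp : (0:ℝ) < |T - T / 2| ^ β := Real.rpow_pos_of_pos habs β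
    nlinarith [norm_nonneg (T ^ β • v T - (T / 2) ^ β • v (T / 2))]
  have hφ0 : (0:ℝ) ≤ ‖φ‖ := norm_nonneg φ
  have hfac : ‖φ‖ * (Ku * Bv + Bu * Kv + Bu * Bv) ≤ (‖φ‖ + 1) * (Bu + Ku) * (Bv + Kv) := by
    nlinarith [mul_nonneg hKu0 hKv0, mul_nonneg hBu0 hBv0, mul_nonneg hBu0 hKv0,
      mul_nonneg hKu0 hBv0, mul_nonneg hφ0 (mul_nonneg hKu0 hKv0)]
  constructor
  · intro t htm
    calc ‖φ (u t) (v t)‖ ≤ ‖φ‖ * ‖u t‖ * ‖v t‖ := ContinuousLinearMap.le_opNorm₂ φ _ _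
    _ ≤ ‖φ‖ * Bu * Bv := by
        gcongr
        · exact hBu t htm
        · exact hBv t htm
    _ ≤ (‖φ‖ + 1) * (Bu + Ku) * (Bv + Kv) := by
        nlinarith [mul_nonneg hKu0 hKv0, mul_nonneg hBu0 hKv0, mul_nonneg hKu0 hBv0,
          mul_nonneg hφ0 (mul_nonneg hKu0 hKv0), mul_nonneg hφ0 (mul_nonneg hBu0 hKv0),
          mul_nonneg hφ0 (mul_nonneg hKu0 hBv0)]
  · intro t htm s hsm
    rcases lt_trichotomy s t with hlt | heq | hgt
    · have hstep := sh_step φ hα0 hα1 hβ0 hβ1 hβα u v hsm.1 hlt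
        (hBu t htm) (hBu s hsm) (hBv t htm) (hBv s hsm)
        (by have := hKu t htm s hsm; rwa [abs_of_pos (sub_pos.mpr hlt)] at this)
        (by have := hKv t htm s hsm; rwa [abs_of_pos (sub_pos.mpr hlt)] at this)
      rw [abs_of_pos (sub_pos.mpr hlt)]
      exact hstep.trans (mul_le_mul_of_nonneg_right hfac
        (Real.rpow_nonneg (by linarith) β))
    · subst heq
      simp [Real.zero_rpow hβ0.ne']
    · have hstep := sh_step φ hα0 hα1 hβ0 hβ1 hβα u v htm.1 hgt
        (hBu s hsm) (hBu t htm) (hBv s hsm) (hBv t htm)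
        (by have := hKu s hsm t htm; rwa [abs_of_pos (sub_pos.mpr hgt)] at this)
        (by have := hKv s hsm t htm; rwa [abs_of_pos (sub_pos.mpr hgt)] at this)
      rw [abs_sub_comm, abs_of_pos (sub_pos.mpr hgt), ← norm_neg, neg_sub]
      exact hstep.trans (mul_le_mul_of_nonneg_right hfac
        (Real.rpow_nonneg (by linarith) β))
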